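/- Coprimality in the caterpillar setup (rank two version): let S be a UFD, P(y), Q(x) irreducible polynomials over S not divisible by y (resp. x), with P not associate to Q, and suppose P depends on y and Q depends on x. In L = S[x^{±1}, y^{±1}], set z = P(y)/x and u = Q(z)/y (assuming Q(z)/y ∈ L). Then gcd(z, u) = 1 in L, i.e., any common divisor of z and u in L is a unit. -/
import Mathlib

open Polynomial LaurentPolynomial

lemma monomial_factor {R : Type*} [CommRing R] [IsDomain R] {f g : R[X]} {p : R} {N : ℕ}
    (hp : p ≠ 0) (h : f * g = Polynomial.C p * X ^ N) :
    ∃ (c : R) (a : ℕ), f = Polynomial.C c * X ^ a ∧ c ∣ p := by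
  have hXN : (X : R[X]) ^ N ≠ 0 := pow_ne_zero N Polynomial.X_ne_zero
  have hrhs : Polynomial.C p * X ^ N ≠ 0 :=
    mul_ne_zero (by simpa using hp) hXN
  have hf : f ≠ 0 := fun h0 => hrhs (by rw [← h, h0, zero_mul])
  have hg : g ≠ 0 := fun h0 => hrhs (by rw [← h, h0, mul_zero])
  have hdeg : f.natDegree + g.natDegree = N := by
    have := Polynomial.natDegree_mul hf hg
    rw [h] at this
    simpa [Polynomial.natDegree_C_mul_X_pow N p hp] using this.symm
  have htdeg : f.natTrailingDegree + g.natTrailingDegree = N := by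
    have := Polynomial.natTrailingDegree_mul hf hg
    rw [h] at this
    have h2 : (Polynomial.C p * X ^ N).natTrailingDegree = N := by
      rw [Polynomial.natTrailingDegree_mul (by simpa using hp) hXN]
      simp
    rw [h2] at this
    exact this.symm
  have h1 := f.natTrailingDegree_le_natDegree
  have h2 := g.natTrailingDegree_le_natDegree
  have hft : f.natTrailingDegree = f.natDegree := by omega
  have hgt : g.natTrailingDegree = g.natDegree := by omega
  have hfm : f = Polynomial.C (f.coeff f.natDegree) * X ^ f.natDegree := by
    ext n
    rcases lt_trichotomy n f.natDegree with hn | hn | hn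
    · rw [Polynomial.coeff_eq_zero_of_lt_natTrailingDegree (hft ▸ hn)]
      rw [Polynomial.coeff_C_mul, Polynomial.coeff_X_pow, if_neg (by omega), mul_zero]
    · subst hn; simp [Polynomial.coeff_C_mul, Polynomial.coeff_X_pow]
    · rw [Polynomial.coeff_eq_zero_of_natDegree_lt hn]
      rw [Polynomial.coeff_C_mul, Polynomial.coeff_X_pow, if_neg (by omega), mul_zero]
  refine ⟨f.coeff f.natDegree, f.natDegree, hfm, ⟨g.coeff g.natDegree, ?_⟩⟩
  have hgm : g = Polynomial.C (g.coeff g.natDegree) * X ^ g.natDegree := by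
    ext n
    rcases lt_trichotomy n g.natDegree with hn | hn | hn
    · rw [Polynomial.coeff_eq_zero_of_lt_natTrailingDegree (hgt ▸ hn)]
      rw [Polynomial.coeff_C_mul, Polynomial.coeff_X_pow, if_neg (by omega), mul_zero]
    · subst hn; simp [Polynomial.coeff_C_mul, Polynomial.coeff_X_pow]
    · rw [Polynomial.coeff_eq_zero_of_natDegree_lt hn]
      rw [Polynomial.coeff_C_mul, Polynomial.coeff_X_pow, if_neg (by omega), mul_zero]
  have := h
  rw [hfm, hgm] at this
  have hcoeff := congrArg (fun q => Polynomial.coeff q N) this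
  simp only [Polynomial.coeff_C_mul] at hcoeff
  rw [mul_mul_mul_comm, ← Polynomial.C_mul, ← pow_add, hdeg] at this
  have := congrArg (fun q => Polynomial.coeff q N) this
  simpa [Polynomial.coeff_C_mul, Polynomial.coeff_X_pow, mul_assoc] using this.symm

/-- A divisor of a nonzero constant in a Laurent polynomial ring over a domain is, up to a
power of `T`, a constant dividing it. -/
lemma dvd_C_structure {R : Type*} [CommRing R] [IsDomain R] {w : R[T;T⁻¹]} {p : R}
    (hp : p ≠ 0) (h : w ∣ LaurentPolynomial.C p) :
    ∃ (c : R) (n : ℤ), w = LaurentPolynomial.C c * T n ∧ c ∣ p := by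
  obtain ⟨v, hv⟩ := h
  obtain ⟨n₁, w', hw'⟩ := exists_T_pow w
  obtain ⟨n₂, v', hv'⟩ := exists_T_pow v
  have key : w' * v' = Polynomial.C p * X ^ (n₁ + n₂) := by
    apply Polynomial.toLaurent_injective
    rw [map_mul, hw', hv', Polynomial.toLaurent_C_mul_X_pow,
      mul_mul_mul_comm, hv, ← T_add]
    norm_cast
  obtain ⟨c, a, hfm, hcp⟩ := monomial_factor hp key
  refine ⟨c, (a : ℤ) - n₁, ?_, hcp⟩
  have : w = toLaurent w' * T (-n₁) := by
    rw [hw', mul_T_assoc]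
    simp
  rw [this, hfm, map_mul, Polynomial.toLaurent_C, Polynomial.toLaurent_X_pow, mul_T_assoc,
    sub_eq_add_neg]

/-- `C c ∣ C d` in Laurent polynomials implies `c ∣ d`. -/
lemma C_dvd_C {R : Type*} [CommRing R] [IsDomain R] {c d : R}
    (h : LaurentPolynomial.C c ∣ LaurentPolynomial.C d) : c ∣ d := by
  obtain ⟨v, hv⟩ := h
  obtain ⟨n, v', hv'⟩ := exists_T_pow v
  have key : Polynomial.C c * v' = Polynomial.C d * X ^ n := by
    apply Polynomial.toLaurent_injective
    rw [map_mul, hv', Polynomial.toLaurent_C, map_mul, Polynomial.toLaurent_C,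
      Polynomial.toLaurent_X_pow, ← mul_assoc, ← hv]
  have h2 := congrArg (fun q => Polynomial.coeff q n) key
  simp only [Polynomial.coeff_C_mul, Polynomial.coeff_X_pow, if_pos rfl, mul_one, if_true, eq_self_iff_true] at h2
  exact ⟨v'.coeff n, h2.symm⟩

/-- If `C s` divides `toLaurent P` then `s` divides every coefficient of `P`. -/
lemma C_dvd_toLaurent {R : Type*} [CommRing R] [IsDomain R] {s : R} {P : R[X]}
    (h : LaurentPolynomial.C s ∣ toLaurent P) : ∀ i, s ∣ P.coeff i := by
  obtain ⟨v, hv⟩ := h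
  obtain ⟨n, v', hv'⟩ := exists_T_pow v
  have key : Polynomial.C s * v' = P * X ^ n := by
    apply Polynomial.toLaurent_injective
    rw [map_mul, hv', Polynomial.toLaurent_C, map_mul, Polynomial.toLaurent_X_pow,
      ← mul_assoc, ← hv]
  intro i
  have := congrArg (fun q => Polynomial.coeff q (i + n)) key
  simp only [Polynomial.coeff_C_mul, Polynomial.coeff_mul_X_pow] at this
  exact ⟨v'.coeff (i + n), this.symm⟩

instance laurent_isDomain {R : Type*} [CommRing R] [IsDomain R] :
    IsDomain (LaurentPolynomial R) :=
  letI : NoZeroDivisors (LaurentPolynomial R) :=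
    (inferInstance : NoZeroDivisors (AddMonoidAlgebra R ℤ))
  letI : Nontrivial (LaurentPolynomial R) :=
    (inferInstance : Nontrivial (AddMonoidAlgebra R ℤ))
  NoZeroDivisors.to_isDomain _



open LaurentPolynomial in
/-- Coprimality in the caterpillar setup (rank-two version).  Let `S` be a UFD and let
`P, Q ∈ S[w]` be irreducible one-variable polynomials with nonzero constant term (i.e. not
divisible by their variable), each of positive degree (`P` depends on `y`, `Q` on `x`), and
`P` not associate to `Q`.  In the Laurent polynomial ring `L = S[x^{±1}, y^{±1}]` (realized as
`LaurentPolynomial (LaurentPolynomial S)`, with `x` the outer and `y` the inner variable), set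
`z = P(y)/x` and let `u` satisfy `u·y = Q(z)` (the assumption `Q(z)/y ∈ L`).  Then
`gcd(z,u) = 1` in `L`: every common divisor of `z` and `u` is a unit. -/
theorem stmt13 {S : Type*} [CommRing S] [IsDomain S] [UniqueFactorizationMonoid S]
    (P Q : Polynomial S) (hP : Irreducible P) (hQ : Irreducible Q)
    (hP0 : P.coeff 0 ≠ 0) (hQ0 : Q.coeff 0 ≠ 0)
    (hPdeg : 0 < P.natDegree) (hQdeg : 0 < Q.natDegree)
    (hPQ : ¬ Associated P Q) :
    let L := LaurentPolynomial (LaurentPolynomial S)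
    let φ : S →+* L := LaurentPolynomial.C.comp LaurentPolynomial.C
    let x : L := LaurentPolynomial.T 1
    let y : L := LaurentPolynomial.C (LaurentPolynomial.T 1)
    let z : L := Polynomial.eval₂ φ y P * LaurentPolynomial.T (-1)
    ∀ u : L, u * y = Polynomial.eval₂ φ z Q →
      ∀ w : L, w ∣ z → w ∣ u → IsUnit w := by
  intro L φ x y z u hu w hwz hwu
  set p : LaurentPolynomial S := toLaurent P with hpdef
  have hpne : p ≠ 0 := Polynomial.toLaurent_ne_zero.mpr hP.ne_zero
  -- `P(y) = C p`
  have heval : Polynomial.eval₂ φ y P = LaurentPolynomial.C p := by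
    have : Polynomial.eval₂RingHom φ y =
        (LaurentPolynomial.C (R := LaurentPolynomial S)).comp Polynomial.toLaurent := by
      apply Polynomial.ringHom_ext
      · intro a; simp [φ, Polynomial.toLaurent_C]
      · simp [y, Polynomial.toLaurent_X]
    calc Polynomial.eval₂ φ y P = Polynomial.eval₂RingHom φ y P := rfl
      _ = LaurentPolynomial.C (toLaurent P) := by rw [this]; rfl
  -- `w ∣ C p`
  have hwCp : w ∣ LaurentPolynomial.C p := by
    have hz : z * T 1 = LaurentPolynomial.C p := by
      show Polynomial.eval₂ φ y P * T (-1) * T 1 = LaurentPolynomial.C p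
      rw [heval, mul_T_assoc]; norm_num
    exact hz ▸ hwz.mul_right (T 1)
  -- `w ∣ C (C (Q.coeff 0))`
  have hQz : Polynomial.eval₂ φ z Q =
      Polynomial.eval₂ φ z Q.divX * z + φ (Q.coeff 0) := by
    conv_lhs => rw [← Polynomial.divX_mul_X_add Q]
    rw [Polynomial.eval₂_add, Polynomial.eval₂_mul, Polynomial.eval₂_X, Polynomial.eval₂_C]
  have hwq : w ∣ LaurentPolynomial.C (LaurentPolynomial.C (Q.coeff 0)) := by
    have h1 : w ∣ u * y := hwu.mul_right y
    rw [hu, hQz] at h1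
    have h2 : w ∣ Polynomial.eval₂ φ z Q.divX * z := hwz.mul_left _
    have := (dvd_sub h1 h2)
    simpa [φ] using this
  -- structure of `w`
  obtain ⟨c, n, hw, -⟩ := dvd_C_structure hpne hwCp
  have hCcw : LaurentPolynomial.C c ∣ w := ⟨T n, hw⟩
  have hcp : c ∣ p := C_dvd_C (hCcw.trans hwCp)
  have hcq : c ∣ LaurentPolynomial.C (Q.coeff 0) := C_dvd_C (hCcw.trans hwq)
  obtain ⟨s, k, hc, -⟩ := dvd_C_structure hQ0 hcq
  have hCsc : LaurentPolynomial.C s ∣ c := ⟨T k, hc⟩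
  have hsP : Polynomial.C s ∣ P :=
    (Polynomial.C_dvd_iff_dvd_coeff s P).mpr (C_dvd_toLaurent (hCsc.trans hcp))
  -- `s` is a unit since `P` is irreducible of positive degree
  have hs : IsUnit s := by
    obtain ⟨t, ht⟩ := hsP
    rcases hP.isUnit_or_isUnit ht with h | h
    · exact Polynomial.isUnit_C.mp h
    · exfalso
      have ht0 : t.natDegree = 0 := Polynomial.natDegree_eq_zero_of_isUnit h
      have : P.natDegree ≤ 0 := by
        calc P.natDegree ≤ (Polynomial.C s).natDegree + t.natDegree :=
              ht ▸ Polynomial.natDegree_mul_le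
          _ = 0 := by simp [ht0]
      omega
  -- conclude
  have hcunit : IsUnit c := by
    rw [hc]
    exact (hs.map LaurentPolynomial.C).mul (isUnit_T k)
  rw [hw]
  exact (hcunit.map LaurentPolynomial.C).mul (isUnit_T n)
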